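/- arXiv:2208.11190 — 2 statements merged into one kernel-verified Lean document; each statement's English description precedes it below -/
import Mathlib

section
/- Let $T \geq 2$ and $2 \leq t \leq T-1$ be integers, $\delta \in (0,1)$, and $p_0, s, k > 0$. Define $\overline{\delta}(T,t) = \dfrac{(2^t - 2)(T+1) - (t-1) 2^t}{(2^t - 1)(T+1) - t\, 2^t}$. Then $\dfrac{\left[\frac{T+2-t}{T+1} - \frac{T+1-t}{T+1}\delta\right] p_0}{\left[\frac{T+2-t}{T+1} - \frac{T+1-t}{T+1}\delta\right] p_0 + (1-\delta) s} \geq \dfrac{\left[(1/2)^{t-1} - (1/2)^t \delta\right] p_0}{\left[(1/2)^{t-1} - (1/2)^t \delta\right] p_0 + (1-\delta) s}$ if and only if $\delta \leq \overline{\delta}(T,t)$. -/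
set_option maxHeartbeats 800000


theorem stmt_6 (T t : ℕ) (hT : 2 ≤ T) (ht : 2 ≤ t) (htT : t + 1 ≤ T)
    (δ p0 s k : ℝ) (hδ : δ ∈ Set.Ioo (0:ℝ) 1) (hp0 : 0 < p0) (hs : 0 < s) (hk : 0 < k) :
    ((((T:ℝ) + 2 - t)/((T:ℝ)+1) - (((T:ℝ) + 1 - t)/((T:ℝ)+1)) * δ) * p0 /
        ((((T:ℝ) + 2 - t)/((T:ℝ)+1) - (((T:ℝ) + 1 - t)/((T:ℝ)+1)) * δ) * p0 + (1-δ)*s) ≥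
      ((1/2:ℝ)^(t-1) - (1/2:ℝ)^t * δ) * p0 /
        (((1/2:ℝ)^(t-1) - (1/2:ℝ)^t * δ) * p0 + (1-δ)*s))
    ↔ δ ≤ (((2:ℝ)^t - 2)*((T:ℝ)+1) - ((t:ℝ)-1)*(2:ℝ)^t) /
            (((2:ℝ)^t - 1)*((T:ℝ)+1) - (t:ℝ)*(2:ℝ)^t) := by
  obtain ⟨hδ0, hδ1⟩ := hδ
  have h1δ : 0 < 1 - δ := by linarith
  have hTt : (t:ℝ) + 1 ≤ (T:ℝ) := by exact_mod_cast htT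
  have ht2 : (2:ℝ) ≤ (t:ℝ) := by exact_mod_cast ht
  have hT1 : (0:ℝ) < (T:ℝ) + 1 := by linarith
  have h2t : (0:ℝ) < (2:ℝ)^t := by positivity
  have htlt : (t:ℝ) < (2:ℝ)^t := by exact_mod_cast (Nat.lt_two_pow_self (n := t))
  have h4le : (4:ℝ) ≤ (2:ℝ)^t := by
    calc (4:ℝ) = (2:ℝ)^2 := by norm_num
    _ ≤ (2:ℝ)^t := by exact pow_le_pow_right₀ (by norm_num) ht
  have hpow : (1/2:ℝ)^(t-1) = 2 * (1/2:ℝ)^t := by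
    have h : t = t - 1 + 1 := by omega
    conv_rhs => rw [h]
    rw [pow_succ]; ring
  have hinv : (1/2:ℝ)^t = ((2:ℝ)^t)⁻¹ := by rw [one_div, inv_pow]
  set A : ℝ := ((T:ℝ) + 2 - t)/((T:ℝ)+1) - (((T:ℝ) + 1 - t)/((T:ℝ)+1)) * δ with hAdef
  set B : ℝ := (1/2:ℝ)^(t-1) - (1/2:ℝ)^t * δ with hBdef
  have hAeq : A = (((T:ℝ) + 2 - t) - ((T:ℝ) + 1 - t) * δ) / ((T:ℝ)+1) := by
    rw [hAdef]; ring
  have hBeq : B = (2 - δ) / (2:ℝ)^t := by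
    rw [hBdef, hpow, hinv]; field_simp
  have hA : 0 < A := by
    rw [hAeq]
    apply div_pos _ hT1
    nlinarith
  have hB : 0 < B := by
    rw [hBeq]
    apply div_pos (by linarith) h2t
  have hD : (0:ℝ) < ((2:ℝ)^t - 1)*((T:ℝ)+1) - (t:ℝ)*(2:ℝ)^t := by
    nlinarith
  have h1 : (A * p0 / (A * p0 + (1-δ)*s) ≥ B * p0 / (B * p0 + (1-δ)*s)) ↔ B ≤ A := by
    rw [ge_iff_le, div_le_div_iff₀ (by positivity) (by positivity)]
    constructor <;> intro h <;>
      nlinarith [mul_pos hp0 (mul_pos h1δ hs), mul_pos hA hp0, mul_pos hB hp0]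
  rw [h1, hAeq, hBeq, div_le_div_iff₀ h2t hT1, le_div_iff₀ hD]
  constructor <;> intro h <;> linarith
end

section
/- Let $p_0 > 0$, $(p_j)_{j\geq 1}$ positive, $S_l = \sum_{j=1}^{l-1} p_j$, $\gamma_l = \dfrac{\frac{1}{4}p_0 + S_l}{\frac{1}{2}p_0 + S_l}$ for $l \geq 2$, and $\delta \in (0,1)$. Then the map $l \mapsto \dfrac{\left(\frac{1}{2} - \frac{1}{4}\gamma_l \delta\right) p_0}{\left(\frac{1}{2} - \frac{1}{4}\gamma_l \delta\right) p_0 + (1 - \gamma_l \delta) S_l}$ is weakly decreasing in $l$ for $l \geq 2$. -/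
set_option maxHeartbeats 1000000

noncomputable def Sfun (p : ℕ → ℝ) (m : ℕ) : ℝ := ∑ j ∈ Finset.Ico 1 m, p j

noncomputable def gam (p0 : ℝ) (p : ℕ → ℝ) (m : ℕ) : ℝ :=
  ((1/4) * p0 + Sfun p m) / ((1/2) * p0 + Sfun p m)

lemma key (p0 δ S T : ℝ) (hp0 : 0 < p0) (hδ0 : 0 < δ) (hδ1 : δ < 1)
    (hS : 0 < S) (hST : S ≤ T) :
    ((1/2 - (1/4) * (((1/4)*p0+T)/((1/2)*p0+T)) * δ) * p0) /
      ((1/2 - (1/4) * (((1/4)*p0+T)/((1/2)*p0+T)) * δ) * p0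
        + (1 - (((1/4)*p0+T)/((1/2)*p0+T)) * δ) * T) ≤
    ((1/2 - (1/4) * (((1/4)*p0+S)/((1/2)*p0+S)) * δ) * p0) /
      ((1/2 - (1/4) * (((1/4)*p0+S)/((1/2)*p0+S)) * δ) * p0
        + (1 - (((1/4)*p0+S)/((1/2)*p0+S)) * δ) * S) := by
  have hT : 0 < T := lt_of_lt_of_le hS hST
  have hDS : 0 < (1/2)*p0 + S := by linarith
  have hDT : 0 < (1/2)*p0 + T := by linarith
  set γS := ((1/4)*p0+S)/((1/2)*p0+S) with hγS
  set γT := ((1/4)*p0+T)/((1/2)*p0+T) with hγT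
  have hγS1 : γS < 1 := by
    rw [hγS, div_lt_one hDS]; linarith
  have hγT1 : γT < 1 := by
    rw [hγT, div_lt_one hDT]; linarith
  have hγS0 : 0 < γS := div_pos (by linarith) hDS
  have hγT0 : 0 < γT := div_pos (by linarith) hDT
  have hγSδ : γS * δ < 1 := by nlinarith
  have hγTδ : γT * δ < 1 := by nlinarith
  have hγSδ0 : 0 < γS * δ := mul_pos hγS0 hδ0
  have hγTδ0 : 0 < γT * δ := mul_pos hγT0 hδ0
  have hAS : 0 < 1/2 - (1/4) * γS * δ := by nlinarith
  have hAT : 0 < 1/2 - (1/4) * γT * δ := by nlinarith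
  have hBS : 0 < 1 - γS * δ := by linarith
  have hBT : 0 < 1 - γT * δ := by linarith
  have hdenS : 0 < (1/2 - (1/4)*γS*δ)*p0 + (1 - γS*δ)*S := by positivity
  have hdenT : 0 < (1/2 - (1/4)*γT*δ)*p0 + (1 - γT*δ)*T := by positivity
  rw [div_le_div_iff₀ hdenT hdenS]
  have hkey : (1/2 - (1/4)*γT*δ) * ((1 - γS*δ)*S) ≤ (1/2 - (1/4)*γS*δ) * ((1 - γT*δ)*T) := by
    rw [hγS, hγT]
    have h4δ : (0:ℝ) ≤ 4 - δ := by linarith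
    have h2δ : (0:ℝ) ≤ 2 - δ := by linarith
    have h1δ : (0:ℝ) ≤ 1 - δ := by linarith
    have hTS : (0:ℝ) ≤ T - S := by linarith
    have h1 : (0:ℝ) ≤ (T-S)*((4-δ)*p0*((2-δ)*p0)) :=
      mul_nonneg hTS (mul_nonneg (mul_nonneg h4δ hp0.le) (mul_nonneg h2δ hp0.le))
    have h2 : (0:ℝ) ≤ (T-S)*((4-δ)*p0*((1-δ)*(T+S))) :=
      mul_nonneg hTS (mul_nonneg (mul_nonneg h4δ hp0.le)
        (mul_nonneg h1δ (by linarith)))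
    have h3 : (0:ℝ) ≤ (T-S)*((2-δ)*((1-δ)*(S*T))) :=
      mul_nonneg hTS (mul_nonneg h2δ (mul_nonneg h1δ
        (mul_nonneg hS.le hT.le)))
    have eq1 : (1/2 - (1/4)*(((1/4)*p0+T)/((1/2)*p0+T))*δ) * ((1 - (((1/4)*p0+S)/((1/2)*p0+S))*δ)*S)
        = (((1/2)*((1/2)*p0+T) - (1/4)*δ*((1/4)*p0+T)) * ((((1/2)*p0+S) - δ*((1/4)*p0+S))*S))
          / (((1/2)*p0+T)*((1/2)*p0+S)) := by
      field_simp
    have eq2 : (1/2 - (1/4)*(((1/4)*p0+S)/((1/2)*p0+S))*δ) * ((1 - (((1/4)*p0+T)/((1/2)*p0+T))*δ)*T)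
        = (((1/2)*((1/2)*p0+S) - (1/4)*δ*((1/4)*p0+S)) * ((((1/2)*p0+T) - δ*((1/4)*p0+T))*T))
          / (((1/2)*p0+T)*((1/2)*p0+S)) := by
      field_simp
    rw [eq1, eq2, div_le_div_iff_of_pos_right (mul_pos hDT hDS)]
    nlinarith [h1, h2, h3]
  nlinarith [mul_pos hp0 hp0, mul_le_mul_of_nonneg_left hkey (le_of_lt hp0)]

theorem stmt_15 (p0 : ℝ) (p : ℕ → ℝ) (hp0 : 0 < p0) (hp : ∀ j, 1 ≤ j → 0 < p j)
    (δ : ℝ) (hδ : δ ∈ Set.Ioo (0:ℝ) 1) :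
    ∀ l : ℕ, 2 ≤ l →
      ((1/2 - (1/4) * gam p0 p (l+1) * δ) * p0) /
        ((1/2 - (1/4) * gam p0 p (l+1) * δ) * p0 + (1 - gam p0 p (l+1) * δ) * Sfun p (l+1)) ≤
      ((1/2 - (1/4) * gam p0 p l * δ) * p0) /
        ((1/2 - (1/4) * gam p0 p l * δ) * p0 + (1 - gam p0 p l * δ) * Sfun p l) := by
  obtain ⟨hδ0, hδ1⟩ := hδ
  intro l hl
  have hS : 0 < Sfun p l := by
    apply Finset.sum_pos (fun j hj => hp j (Finset.mem_Ico.mp hj).1)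
    exact ⟨1, Finset.mem_Ico.mpr ⟨le_refl 1, by omega⟩⟩
  have hsucc : Sfun p (l+1) = Sfun p l + p l := Finset.sum_Ico_succ_top (by omega) p
  have hST : Sfun p l ≤ Sfun p (l+1) := by
    rw [hsucc]; have := hp l (by omega); linarith
  have h := key p0 δ (Sfun p l) (Sfun p (l+1)) hp0 hδ0 hδ1 hS hST
  simpa [gam] using h
end
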